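/- Let ν = (N⊥/N)·Σ_{s=1}^S m^{(s)} m'^{(s)} with m^{(s)}, m'^{(s)} i.i.d. Bernoulli(ξ) independent families, N = max(Σ_s m^{(s)}, 1), N⊥ = min(Σ_s m^{(s)}, 1), θ = 1−(1−ξ)^S. Then E[ν] = ξθ (unconditionally), while if m'^{(s)} = m^{(s)} (same filter), ν = N⊥ and E[ν] = θ. -/

import Mathlib

open MeasureTheory ProbabilityTheory

private lemma alg_key {t : ℝ} (h : t = 0 ∨ 1 ≤ t) : min t 1 / max t 1 * t = min t 1 := by
  rcases h with h | h
  · simp [h]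
  · have ht : t ≠ 0 := by linarith
    rw [min_eq_right h, max_eq_left h, one_div, inv_mul_cancel₀ ht]

private lemma sum_ind_cases {S : ℕ} (g : Fin S → Bool) :
    (∑ s, (if g s then (1:ℝ) else 0)) = 0 ∨ 1 ≤ (∑ s, (if g s then (1:ℝ) else 0)) := by
  by_cases h : ∃ s, g s = true
  · obtain ⟨s, hs⟩ := h
    right
    calc (1:ℝ) = (if g s then (1:ℝ) else 0) := by simp [hs]
    _ ≤ _ := Finset.single_le_sum (f := fun s => if g s then (1:ℝ) else 0)
        (fun i _ => by positivity) (Finset.mem_univ s)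
  · left
    push_neg at h
    simp only [Bool.not_eq_true] at h
    simp [h]

/-- With m, m' two independent i.i.d. Bernoulli(ξ) families over S subnetworks,
θ = 1 − (1−ξ)^S, N⊥ = min(Σ_s m_s, 1), N = max(Σ_s m_s, 1), and
ν = (N⊥/N)·Σ_s m_s m'_s, we have E[ν] = ξθ; moreover, for the same filter
(m' replaced by m) the mixing coefficient equals N⊥ and E[N⊥] = θ. -/
theorem stmt_4 {Ω : Type*} [MeasurableSpace Ω] (μ : Measure Ω) [IsProbabilityMeasure μ]
    (ξ : ℝ) (hξ0 : 0 < ξ) (hξ1 : ξ ≤ 1) (S : ℕ) (hS : 1 ≤ S)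
    (f : (Fin S ⊕ Fin S) → Ω → Bool)
    (hmeas : ∀ i, Measurable (f i))
    (hindep : iIndepFun f μ)
    (hbern : ∀ i, μ {ω | f i ω = true} = ENNReal.ofReal ξ)
    (m m' : Fin S → Ω → Bool) (hm : m = fun s => f (Sum.inl s))
    (hm' : m' = fun s => f (Sum.inr s))
    (Nperp N ν : Ω → ℝ)
    (hNperp : Nperp = fun ω => min (∑ s, (if m s ω then (1:ℝ) else 0)) 1)
    (hN : N = fun ω => max (∑ s, (if m s ω then (1:ℝ) else 0)) 1)
    (hν : ν = fun ω => Nperp ω / N ω * ∑ s, (if m s ω ∧ m' s ω then (1:ℝ) else 0)) :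
    (∫ ω, ν ω ∂μ = ξ * (1 - (1 - ξ) ^ S)) ∧
    (∀ ω, Nperp ω / N ω * (∑ s, (if m s ω ∧ m s ω then (1:ℝ) else 0)) = Nperp ω) ∧
    (∫ ω, Nperp ω ∂μ = 1 - (1 - ξ) ^ S) := by
  subst hm hm' hNperp hN hν
  have hξ0' : (0:ℝ) ≤ 1 - ξ := by linarith
  -- part 2 : pointwise identity
  have part2 : ∀ ω, (min (∑ s, (if f (Sum.inl s) ω then (1:ℝ) else 0)) 1) /
      (max (∑ s, (if f (Sum.inl s) ω then (1:ℝ) else 0)) 1) *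
      (∑ s, (if f (Sum.inl s) ω ∧ f (Sum.inl s) ω then (1:ℝ) else 0)) =
      min (∑ s, (if f (Sum.inl s) ω then (1:ℝ) else 0)) 1 := by
    intro ω
    simp only [and_self]
    exact alg_key (sum_ind_cases (fun s => f (Sum.inl s) ω))
  -- the event A : at least one m s is true
  set A : Set Ω := ⋃ s, f (Sum.inl s) ⁻¹' {true} with hA
  have hAmeas : MeasurableSet A :=
    MeasurableSet.iUnion (fun s => (hmeas _) (measurableSet_singleton true))
  -- Nperp equals indicator of A
  have hNp_ind : ∀ ω, min (∑ s, (if f (Sum.inl s) ω then (1:ℝ) else 0)) 1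
      = A.indicator (fun _ => (1:ℝ)) ω := by
    intro ω
    by_cases h : ω ∈ A
    · obtain ⟨s, hs⟩ : ∃ s, f (Sum.inl s) ω = true := by
        simpa [hA, Set.mem_iUnion] using h
      have h1 : (1:ℝ) ≤ ∑ s, (if f (Sum.inl s) ω then (1:ℝ) else 0) := by
        calc (1:ℝ) = (if f (Sum.inl s) ω then (1:ℝ) else 0) := by simp [hs]
        _ ≤ _ := Finset.single_le_sum (f := fun s => if f (Sum.inl s) ω then (1:ℝ) else 0)
            (fun i _ => by positivity) (Finset.mem_univ s)
      rw [min_eq_right h1, Set.indicator_of_mem h]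
    · have h0 : ∀ s, f (Sum.inl s) ω = false := by
        intro s
        have := h
        simp only [hA, Set.mem_iUnion, Set.mem_preimage, Set.mem_singleton_iff] at this
        push_neg at this
        simpa using this s
      rw [Set.indicator_of_notMem h]
      simp [h0]
  -- measure of A
  have hμAc : μ Aᶜ = (ENNReal.ofReal (1 - ξ)) ^ S := by
    have hcompl : Aᶜ = ⋂ i ∈ Finset.univ.image (Sum.inl : Fin S → Fin S ⊕ Fin S),
        f i ⁻¹' {false} := by
      ext ω
      simp only [hA, Set.mem_compl_iff, Set.mem_iUnion, Set.mem_preimage,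
        Set.mem_singleton_iff, Set.mem_iInter, Finset.mem_image, Finset.mem_univ, true_and]
      constructor
      · intro h i hi
        push_neg at h
        obtain ⟨s, _, rfl⟩ := hi
        simpa using h s
      · intro h
        push_neg
        intro s
        simpa using h (Sum.inl s) ⟨s, rfl⟩
    have hkey := hindep.measure_inter_preimage_eq_mul
      (Finset.univ.image (Sum.inl : Fin S → Fin S ⊕ Fin S))
      (sets := fun _ => ({false} : Set Bool))
      (fun i _ => measurableSet_singleton false)
    rw [hcompl, hkey, Finset.prod_image (fun a _ b _ h => Sum.inl.inj h)]
    have hsingle : ∀ i, μ (f i ⁻¹' {false}) = ENNReal.ofReal (1 - ξ) := by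
      intro i
      have h1 : f i ⁻¹' {false} = (f i ⁻¹' {true})ᶜ := by
        ext ω
        simp only [Set.mem_preimage, Set.mem_singleton_iff, Set.mem_compl_iff]
        cases hb : f i ω <;> simp
      have h2 : μ (f i ⁻¹' {true}) = ENNReal.ofReal ξ := by
        rw [← hbern i]; rfl
      rw [h1, measure_compl ((hmeas i) (measurableSet_singleton true)) (measure_ne_top μ _),
        h2, measure_univ, ENNReal.ofReal_sub _ hξ0.le, ENNReal.ofReal_one]
    simp [hsingle]
  have hμA : μ A = 1 - (ENNReal.ofReal (1 - ξ)) ^ S := by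
    rw [← hμAc, ← prob_compl_eq_one_sub hAmeas.compl, compl_compl]
  have hpowle : (ENNReal.ofReal (1 - ξ)) ^ S ≤ 1 := by
    apply pow_le_one₀ (by positivity)
    exact ENNReal.ofReal_le_one.mpr (by linarith)
  -- part 3 : integral of Nperp
  have part3 : ∫ ω, min (∑ s, (if f (Sum.inl s) ω then (1:ℝ) else 0)) 1 ∂μ
      = 1 - (1 - ξ) ^ S := by
    have : ∫ ω, min (∑ s, (if f (Sum.inl s) ω then (1:ℝ) else 0)) 1 ∂μ
        = ∫ ω, A.indicator (fun _ => (1:ℝ)) ω ∂μ := by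
      exact integral_congr_ae (Filter.Eventually.of_forall hNp_ind)
    rw [this, integral_indicator_const _ hAmeas, measureReal_def, hμA, smul_eq_mul, mul_one,
      ENNReal.toReal_sub_of_le hpowle ENNReal.one_ne_top]
    rw [← ENNReal.ofReal_pow hξ0', ENNReal.toReal_one,
      ENNReal.toReal_ofReal (by positivity)]
  refine ⟨?_, part2, part3⟩
  -- Now the main computation for ν
  classical
  -- abbreviations
  set c : Ω → ℝ := fun ω => min (∑ s, (if f (Sum.inl s) ω then (1:ℝ) else 0)) 1 /
      max (∑ s, (if f (Sum.inl s) ω then (1:ℝ) else 0)) 1 with hc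
  set X : Fin S → Ω → ℝ := fun s ω => if f (Sum.inl s) ω then (1:ℝ) else 0 with hXdef
  set Y : Fin S → Ω → ℝ := fun s ω => if f (Sum.inr s) ω then (1:ℝ) else 0 with hYdef
  set Z : Fin S → Ω → ℝ := fun s ω => c ω * X s ω with hZdef
  have hXmeas : ∀ s, Measurable (X s) := fun s =>
    (measurable_of_countable (fun b : Bool => if b then (1:ℝ) else 0)).comp (hmeas (Sum.inl s))
  have hYmeas : ∀ s, Measurable (Y s) := fun s =>
    (measurable_of_countable (fun b : Bool => if b then (1:ℝ) else 0)).comp (hmeas (Sum.inr s))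
  have hsum_meas : Measurable (fun ω => ∑ s, X s ω) :=
    Finset.measurable_sum _ (fun s _ => hXmeas s)
  have hc_meas : Measurable c :=
    (hsum_meas.min measurable_const).div (hsum_meas.max measurable_const)
  have hZmeas : ∀ s, Measurable (Z s) := fun s => hc_meas.mul (hXmeas s)
  have hX01 : ∀ s ω, 0 ≤ X s ω ∧ X s ω ≤ 1 := by
    intro s ω; simp only [hXdef]; split <;> norm_num
  have hY01 : ∀ s ω, 0 ≤ Y s ω ∧ Y s ω ≤ 1 := by
    intro s ω; simp only [hYdef]; split <;> norm_num
  have hc01 : ∀ ω, 0 ≤ c ω ∧ c ω ≤ 1 := by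
    intro ω
    have hsum0 : (0:ℝ) ≤ ∑ s, X s ω := Finset.sum_nonneg (fun s _ => (hX01 s ω).1)
    have hden : (1:ℝ) ≤ max (∑ s, X s ω) 1 := le_max_right _ _
    constructor
    · exact div_nonneg (le_min hsum0 zero_le_one) (by linarith)
    · rw [div_le_one (by linarith)]
      exact le_trans (min_le_right _ _) hden
  have hZ01 : ∀ s ω, 0 ≤ Z s ω ∧ Z s ω ≤ 1 := by
    intro s ω
    constructor
    · exact mul_nonneg (hc01 ω).1 (hX01 s ω).1
    · calc c ω * X s ω ≤ 1 * 1 :=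
          mul_le_mul (hc01 ω).2 (hX01 s ω).2 (hX01 s ω).1 zero_le_one
      _ = 1 := by ring
  have integrable_01 : ∀ {g : Ω → ℝ}, Measurable g → (∀ ω, 0 ≤ g ω ∧ g ω ≤ 1) →
      Integrable g μ := by
    intro g hg h01
    refine ⟨hg.aestronglyMeasurable, HasFiniteIntegral.of_bounded (C := 1)
      (Filter.Eventually.of_forall (fun ω => ?_))⟩
    rw [Real.norm_eq_abs, abs_le]
    exact ⟨by linarith [(h01 ω).1], (h01 ω).2⟩
  have hZint : ∀ s, Integrable (Z s) μ := fun s => integrable_01 (hZmeas s) (hZ01 s)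
  have hYint : ∀ s, Integrable (Y s) μ := fun s => integrable_01 (hYmeas s) (hY01 s)
  have hZYint : ∀ s, Integrable (fun ω => Z s ω * Y s ω) μ := fun s =>
    integrable_01 ((hZmeas s).mul (hYmeas s)) (fun ω => ⟨mul_nonneg (hZ01 s ω).1 (hY01 s ω).1,
      by calc Z s ω * Y s ω ≤ 1 * 1 :=
            mul_le_mul (hZ01 s ω).2 (hY01 s ω).2 (hY01 s ω).1 zero_le_one
        _ = 1 := by ring⟩)
  -- independence of Z s and Y s
  have hZYindep : ∀ s : Fin S, IndepFun (Z s) (Y s) μ := by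
    intro s
    have hdis : Disjoint (Finset.univ.image (Sum.inl : Fin S → Fin S ⊕ Fin S))
        ({Sum.inr s} : Finset (Fin S ⊕ Fin S)) := by
      simp [Finset.disjoint_left]
    have hbase := hindep.indepFun_finset _ _ hdis hmeas
    have hmemT : ∀ s' : Fin S, Sum.inl s' ∈ Finset.univ.image (Sum.inl : Fin S → Fin S ⊕ Fin S) :=
      fun s' => Finset.mem_image_of_mem _ (Finset.mem_univ s')
    set T := Finset.univ.image (Sum.inl : Fin S → Fin S ⊕ Fin S)
    have hφ : Measurable (fun v : {i // i ∈ T} → Bool =>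
        (min (∑ s', if v ⟨Sum.inl s', hmemT s'⟩ then (1:ℝ) else 0) 1 /
          max (∑ s', if v ⟨Sum.inl s', hmemT s'⟩ then (1:ℝ) else 0) 1) *
        (if v ⟨Sum.inl s, hmemT s⟩ then (1:ℝ) else 0)) := measurable_of_countable _
    have hψ : Measurable (fun w : {i // i ∈ ({Sum.inr s} : Finset (Fin S ⊕ Fin S))} → Bool =>
        if w ⟨Sum.inr s, Finset.mem_singleton_self _⟩ then (1:ℝ) else 0) :=
      measurable_of_countable _
    exact hbase.comp hφ hψ
  -- expected value of Y s
  have hEY : ∀ s, ∫ ω, Y s ω ∂μ = ξ := by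
    intro s
    have hind : Y s = (f (Sum.inr s) ⁻¹' {true}).indicator (fun _ => (1:ℝ)) := by
      funext ω
      by_cases h : f (Sum.inr s) ω <;>
        simp [hYdef, h, Set.indicator, Set.mem_preimage]
    rw [hind, integral_indicator_const _ ((hmeas _) (measurableSet_singleton true))]
    have : μ (f (Sum.inr s) ⁻¹' {true}) = ENNReal.ofReal ξ := by
      rw [← hbern (Sum.inr s)]; rfl
    rw [measureReal_def, this, smul_eq_mul, mul_one, ENNReal.toReal_ofReal hξ0.le]
  -- pointwise rewriting of ν
  have hν_eq : ∀ ω, c ω * (∑ s, (if f (Sum.inl s) ω ∧ f (Sum.inr s) ω then (1:ℝ) else 0))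
      = ∑ s, Z s ω * Y s ω := by
    intro ω
    rw [Finset.mul_sum]
    refine Finset.sum_congr rfl (fun s _ => ?_)
    have : (if f (Sum.inl s) ω ∧ f (Sum.inr s) ω then (1:ℝ) else 0) = X s ω * Y s ω := by
      simp only [hXdef, hYdef]
      by_cases h1 : f (Sum.inl s) ω <;> by_cases h2 : f (Sum.inr s) ω <;> simp [h1, h2]
    rw [this, hZdef]; ring
  -- sum of Z equals Nperp
  have hsumZ : ∀ ω, ∑ s, Z s ω = min (∑ s, (if f (Sum.inl s) ω then (1:ℝ) else 0)) 1 := by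
    intro ω
    have : ∑ s, Z s ω = c ω * ∑ s, X s ω := by rw [Finset.mul_sum]
    rw [this]
    exact alg_key (sum_ind_cases (fun s => f (Sum.inl s) ω))
  calc ∫ ω, c ω * (∑ s, (if f (Sum.inl s) ω ∧ f (Sum.inr s) ω then (1:ℝ) else 0)) ∂μ
      = ∫ ω, ∑ s, Z s ω * Y s ω ∂μ :=
        integral_congr_ae (Filter.Eventually.of_forall hν_eq)
    _ = ∑ s, ∫ ω, Z s ω * Y s ω ∂μ := integral_finset_sum _ (fun s _ => hZYint s)
    _ = ∑ s, (∫ ω, Z s ω ∂μ) * (∫ ω, Y s ω ∂μ) := by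
        refine Finset.sum_congr rfl (fun s _ => ?_)
        exact (hZYindep s).integral_fun_mul_eq_mul_integral (hZint s).aestronglyMeasurable (hYint s).aestronglyMeasurable
    _ = (∑ s, ∫ ω, Z s ω ∂μ) * ξ := by
        rw [Finset.sum_mul]
        exact Finset.sum_congr rfl (fun s _ => by rw [hEY s])
    _ = (∫ ω, ∑ s, Z s ω ∂μ) * ξ := by rw [integral_finset_sum _ (fun s _ => hZint s)]
    _ = (1 - (1 - ξ) ^ S) * ξ := by
        rw [integral_congr_ae (Filter.Eventually.of_forall hsumZ), part3]
    _ = ξ * (1 - (1 - ξ) ^ S) := by ring
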